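/- Let C_n denote the number of steady words of length n with i-th letter chosen from a given alphabet A_i of size 7, and let F_{n+1} denote the number of words of length n+1 (with letters from the respective alphabets) that are not steady but whose length-n prefix is steady. Then F_{n+1} ≤ 2C_n + 2C_{n-1} + Σ_{i≥0} (3+8i) C_{n-2-i}. -/

import Mathlib

/-- A word is square-free if it contains no nonempty factor of the form `X ++ X`. -/
def SquareFree {α : Type*} (W : List α) : Prop :=
  ∀ X : List α, X ≠ [] → ¬ (X ++ X) <:+: W

/-- A square-free word is steady if deleting any single letter leaves it square-free. -/
def Steady {α : Type*} (W : List α) : Prop :=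
  SquareFree W ∧ ∀ i < W.length, SquareFree (W.eraseIdx i)

namespace Stmt17
variable {α : Type*} (d : α)

/-- window equality: positions a..a+k-1 match a+k..a+2k-1 -/
def SqWin (V : List α) (a k : ℕ) : Prop := ∀ j < k, V.getD (a+j) d = V.getD (a+k+j) d

/-- witness: erasing index i from W (of length n+1) leaves a square suffix of half-length k -/
def Wit (n : ℕ) (W : List α) (k i : ℕ) : Prop :=
  1 ≤ k ∧ 2*k ≤ n ∧ i < n ∧ n < i + 2*k ∧ SqWin d (W.eraseIdx i) (n-2*k) k

section idx
variable (l l' : List α) (i j m : ℕ)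

lemma getD_take (h : j < m) : (l.take m).getD j d = l.getD j d := by
  rcases lt_or_ge j l.length with hj | hj
  · have h1 : j < (l.take m).length := by simp [lt_min_iff]; omega
    rw [List.getD_eq_getElem _ _ h1, List.getD_eq_getElem _ _ hj, List.getElem_take]
  · rw [List.getD_eq_default _ _ (by simp; omega), List.getD_eq_default _ _ hj]

lemma getD_eraseIdx_lt (hi : i < l.length) (h : j < i) :
    (l.eraseIdx i).getD j d = l.getD j d := by
  have h1 : j < (l.eraseIdx i).length := by rw [List.length_eraseIdx_of_lt hi]; omega
  rw [List.getD_eq_getElem _ _ h1, List.getD_eq_getElem _ _ (by omega),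
    List.getElem_eraseIdx]
  simp [h]

lemma getD_eraseIdx_ge (hi : i ≤ j) (h : j + 1 < l.length) :
    (l.eraseIdx i).getD j d = l.getD (j+1) d := by
  have h1 : j < (l.eraseIdx i).length := by
    rw [List.length_eraseIdx_of_lt (by omega)]; omega
  rw [List.getD_eq_getElem _ _ h1, List.getD_eq_getElem _ _ (by omega),
    List.getElem_eraseIdx]
  have : ¬ (j < i) := by omega
  simp [this]

lemma eq_of_getD (hl : l.length = l'.length)
    (h : ∀ p < l.length, l.getD p d = l'.getD p d) : l = l' := by
  apply List.ext_getElem hl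
  intro p h1 h2
  have := h p h1
  rwa [List.getD_eq_getElem _ _ h1, List.getD_eq_getElem _ _ h2] at this

lemma getD_of_take_eq (h : l.take m = l'.take m) (hj : j < m) :
    l.getD j d = l'.getD j d := by
  rw [← getD_take d l j m hj, ← getD_take d l' j m hj, h]

end idx

lemma getD_suffix {u l : List α} {j : ℕ} (h : u <:+ l) (hj : j < u.length) :
    u.getD j d = l.getD (l.length - u.length + j) d := by
  obtain ⟨v, rfl⟩ := h
  have hlen : (v ++ u).length = v.length + u.length := by simp
  have h1 : v.length + u.length - u.length + j = v.length + j := by omega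
  rw [hlen, h1, List.getD_eq_getElem u _ hj,
    List.getD_eq_getElem (v ++ u) _ (by simp; omega), List.getElem_append_right (by omega)]
  congr 1
  omega

lemma not_squareFree_of_win (V : List α) (a k : ℕ) (hk : k ≠ 0) (h2 : a + 2*k ≤ V.length)
    (hw : SqWin d V a k) : ¬ SquareFree V := by
  intro hsf
  have key2 : (V.drop (a+k)).take k = (V.drop a).take k := by
    apply List.ext_getElem (by simp; omega)
    intro p hp1 hp2
    have hpk : p < k := by simp at hp1; omega
    simp only [List.getElem_take, List.getElem_drop]
    have := hw p hpk
    rw [List.getD_eq_getElem V _ (by omega), List.getD_eq_getElem V _ (by omega)] at this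
    exact this.symm
  have key : (V.drop a).take (2*k) = (V.drop a).take k ++ (V.drop a).take k := by
    rw [two_mul, List.take_add, List.drop_drop, key2]
  have hne : (V.drop a).take k ≠ [] := by
    have : ((V.drop a).take k).length = k := by simp; omega
    intro h; rw [h] at this; simp at this; omega
  refine hsf _ hne ?_
  rw [← key]
  exact (List.take_prefix _ _).isInfix.trans (List.drop_suffix _ _).isInfix

lemma win_of_suffix_square {X V : List α} (h : X ++ X <:+ V) :
    SqWin d V (V.length - 2*X.length) X.length := by
  intro j hj
  have hlen : 2 * X.length ≤ V.length := by
    have := h.length_le; simp at this; omega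
  have h1 := getD_suffix d h (j := j) (by simp; omega)
  have h2 := getD_suffix d h (j := X.length + j) (by simp; omega)
  have e1 : V.length - (X ++ X).length + j = V.length - 2*X.length + j := by
    simp; omega
  have e2 : V.length - (X ++ X).length + (X.length + j)
      = V.length - 2*X.length + X.length + j := by simp; omega
  rw [e1] at h1; rw [e2] at h2
  rw [← h1, ← h2]
  rw [List.getD_eq_getElem _ _ (by simp; omega), List.getD_eq_getElem _ _ (by simp; omega),
    List.getElem_append_left (by omega), List.getElem_append_right (by omega)]
  congr 1
  omega

lemma squareFree_take {W : List α} (m : ℕ) (h : SquareFree W) : SquareFree (W.take m) := by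
  intro X hX hinf
  exact h X hX (hinf.trans (List.take_prefix _ _).isInfix)

lemma take_eraseIdx_comm (W : List α) (i m : ℕ) (him : i < m) (hm : m ≤ W.length) :
    (W.take m).eraseIdx i = (W.eraseIdx i).take (m-1) := by
  have l1 : (W.take i).length = i := by simp; omega
  rw [List.eraseIdx_eq_take_drop_succ, List.eraseIdx_eq_take_drop_succ,
    List.take_append, List.take_take, List.take_take, List.drop_take, l1]
  have e1 : min i m = i := by omega
  have e2 : m - (i+1) = m - 1 - i := by omega
  have e3 : min (m-1) i = i := by omega
  rw [e1, e2, e3]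

lemma steady_take {W : List α} (m : ℕ) (h : Steady W) : Steady (W.take m) := by
  rcases le_or_gt W.length m with hm | hm
  · rwa [List.take_of_length_le hm]
  constructor
  · exact squareFree_take m h.1
  · intro i hi
    have hi' : i < m := by simp at hi; omega
    rw [take_eraseIdx_comm W i m hi' (le_of_lt hm)]
    exact squareFree_take _ (h.2 i (by omega))

lemma infix_suffix_or_take {l V : List α} (h : l <:+: V) :
    l <:+ V ∨ l <:+: V.take (V.length - 1) := by
  obtain ⟨u, v, huv⟩ := h
  rcases eq_or_ne v [] with rfl | hv
  · left; exact ⟨u, by simpa using huv⟩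
  · right
    have h1 : u ++ l <+: V := ⟨v, by simpa using huv⟩
    have h2 : (u ++ l).length ≤ V.length - 1 := by
      have := congrArg List.length huv
      simp at this
      have : v.length ≠ 0 := by simpa using hv
      simp
      omega
    have h3 : u ++ l <+: V.take (V.length - 1) := List.prefix_take_iff.mpr ⟨h1, h2⟩
    exact (List.suffix_append u l).isInfix.trans h3.isInfix

lemma suffix_of_suffix_le {l₁ l₂ V : List α} (h1 : l₁ <:+ V) (h2 : l₂ <:+ V)
    (hle : l₁.length ≤ l₂.length) : l₁ <:+ l₂ := by
  rcases List.suffix_or_suffix_of_suffix h1 h2 with h | h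
  · exact h
  · have h3 := h.length_le
    have : l₂.length = l₁.length := by omega
    rw [List.IsSuffix.eq_of_length h this]

section main
variable {n : ℕ} {W : List α}

/-- Case A: a non-squarefree W with steady length-n prefix ends in a doubled letter. -/
lemma caseA (hl : W.length = n + 1) (hP : Steady (W.take n)) (hsq : ¬ SquareFree W) : 1 ≤ n ∧ W.getD n d = W.getD (n-1) d := by
  rw [SquareFree] at hsq
  push_neg at hsq
  obtain ⟨X, hX, hinf⟩ := hsq
  rcases infix_suffix_or_take hinf with hsuf | htk
  · -- suffix square of W, half-length k
    have hXl : 1 ≤ X.length := by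
      rcases X with _ | _ <;> simp at hX ⊢
    have h2k : 2 * X.length ≤ n + 1 := by
      have := hsuf.length_le; simp at this; omega
    have hwin := win_of_suffix_square d hsuf
    rw [hl] at hwin
    set k := X.length with hk
    rcases eq_or_lt_of_le hXl with h1 | h2
    · -- k = 1 : the claim
      have hn1 : 1 ≤ n := by omega
      have := hwin 0 (by omega)
      rw [← h1] at this
      constructor
      · exact hn1
      · rw [show n + 1 - 2*1 + 0 = n-1 by omega, show n+1-2*1+1+0 = n by omega] at this
        exact this.symm
    · -- k ≥ 2 : contradiction with steadiness of the prefix (K1)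
      exfalso
      have hnk : n - k < (W.take n).length := by simp; omega
      refine not_squareFree_of_win d ((W.take n).eraseIdx (n-k)) (n+1-2*k) (k-1)
        (by omega) ?_ ?_ (hP.2 (n-k) (by simp; omega))
      · rw [List.length_eraseIdx_of_lt hnk]
        simp only [List.length_take]
        omega
      · intro j hj
        have hj' : j < k := by omega
        have e1 : (n+1-2*k) + j < n - k := by omega
        have l1 : ((W.take n).eraseIdx (n-k)).getD (n+1-2*k+j) d
            = W.getD (n+1-2*k+j) d := by
          rw [getD_eraseIdx_lt d _ _ _ hnk e1, getD_take d W _ n (by omega)]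
        have l2 : ((W.take n).eraseIdx (n-k)).getD (n+1-2*k+(k-1)+j) d
            = W.getD (n+1-k+j) d := by
          rw [show n+1-2*k+(k-1)+j = n-k+(j) by omega,
            getD_eraseIdx_ge d _ _ _ (by omega) (by simp; omega),
            show n-k+j+1 = n+1-k+j by omega, getD_take d W _ n (by omega)]
        rw [l1, l2]
        have := hwin j hj'
        rw [show n+1-2*k+k+j = n+1-k+j by omega] at this
        exact this
  · exfalso
    have : W.take (W.length - 1) = W.take n := by rw [hl]; simp
    rw [this] at htk
    exact hP.1 X hX htk

/-- From a bad deletion inside the prefix, produce a witness. -/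
lemma caseB_wit (hl : W.length = n + 1) (hP : Steady (W.take n)) (hsf : SquareFree W) (i : ℕ) (hi : i < n)
    (hbad : ¬ SquareFree (W.eraseIdx i)) : ∃ k, Wit d n W k i := by
  rw [SquareFree] at hbad
  push_neg at hbad
  obtain ⟨X, hX, hinf⟩ := hbad
  have hVl : (W.eraseIdx i).length = n := by
    rw [List.length_eraseIdx_of_lt (by omega)]; omega
  rcases infix_suffix_or_take hinf with hsuf | htk
  · have hXl : 1 ≤ X.length := by rcases X with _ | _ <;> simp at hX ⊢
    set k := X.length with hk
    have h2k : 2*k ≤ n := by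
      have := hsuf.length_le; simp [hVl] at this; omega
    -- need n < i + 2k, else square inside W
    rcases le_or_gt (i + 2*k) n with hle | hgt
    · exfalso
      -- X++X is a suffix of W.drop (i+1), hence infix of W
      have h1 : W.drop (i+1) <:+ W.eraseIdx i := by
        rw [List.eraseIdx_eq_take_drop_succ W i]; exact List.suffix_append _ _
      have hsuf2 : X ++ X <:+ W.drop (i+1) :=
        suffix_of_suffix_le hsuf h1 (by simp [hl]; omega)
      exact hsf X hX (hsuf2.trans (W.drop_suffix (i+1))).isInfix
    · refine ⟨k, hXl, h2k, hi, hgt, ?_⟩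
      have := win_of_suffix_square d hsuf
      rwa [hVl] at this
  · exfalso
    rw [hVl] at htk
    have : (W.eraseIdx i).take (n-1) = (W.take n).eraseIdx i := by
      rw [take_eraseIdx_comm W i n hi (by omega)]
    rw [this] at htk
    exact hP.2 i (by simp; omega) X hX htk

end main

section part2
variable {n : ℕ} {W : List α}

lemma exists_wit (hl : W.length = n + 1) (hP : Steady (W.take n)) (hsf : SquareFree W)
    (hns : ¬ Steady W) : ∃ k i, Wit d n W k i := by
  rw [Steady] at hns
  push_neg at hns
  obtain ⟨i, hi, hbad⟩ := hns hsf
  rcases lt_or_ge i n with hin | hin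
  · obtain ⟨k, hk⟩ := caseB_wit d hl hP hsf i hin hbad
    exact ⟨k, i, hk⟩
  · exfalso
    have hieq : i = n := by omega
    subst hieq
    have : W.eraseIdx i = W.take i := by
      rw [List.eraseIdx_eq_take_drop_succ, List.drop_of_length_le (by omega)]
      simp
    rw [this] at hbad
    exact hbad hP.1

lemma K2 (hl : W.length = n + 1) (hP : Steady (W.take n)) (k : ℕ) (hk : 2 ≤ k)
    (hw : Wit d n W k (n-1)) : False := by
  obtain ⟨hk1, h2k, hi, hgt, hwin⟩ := hw
  have hrel : ∀ j, j < k - 1 → W.getD (n-2*k+j) d = W.getD (n-k+j) d := by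
    intro j hj
    have := hwin j (by omega)
    rwa [getD_eraseIdx_lt d W (n-1) _ (by omega) (by omega),
      getD_eraseIdx_lt d W (n-1) _ (by omega) (by omega),
      show n-2*k+k+j = n-k+j by omega] at this
  have hnk1 : n - k - 1 < (W.take n).length := by simp [hl]; omega
  refine not_squareFree_of_win d ((W.take n).eraseIdx (n-k-1)) (n-2*k) (k-1)
    (by omega) ?_ ?_ (hP.2 (n-k-1) (by simp [hl]; omega))
  · rw [List.length_eraseIdx_of_lt hnk1]
    simp only [List.length_take]
    omega
  · intro j hj
    rw [getD_eraseIdx_lt d _ (n-k-1) _ hnk1 (by omega),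
      show n-2*k+(k-1)+j = n-k-1+j by omega,
      getD_eraseIdx_ge d _ (n-k-1) _ (by omega) (by simp [hl]; omega),
      show n-k-1+j+1 = n-k+j by omega,
      getD_take d W _ n (by omega), getD_take d W _ n (by omega)]
    exact hrel j hj

lemma K3 (hl : W.length = n + 1) (k : ℕ) (hk : 2 ≤ k)
    (hw : Wit d n W k (n-2*k+1)) : Wit d n W (k-1) (n-k+1) := by
  obtain ⟨hk1, h2k, hi, hgt, hwin⟩ := hw
  have hrel : ∀ j', 1 ≤ j' → j' < k → W.getD (n-2*k+1+j') d = W.getD (n-k+1+j') d := by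
    intro j' h1 h2
    have := hwin j' (by omega)
    rwa [getD_eraseIdx_ge d W (n-2*k+1) _ (by omega) (by omega),
      getD_eraseIdx_ge d W (n-2*k+1) _ (by omega) (by omega),
      show n-2*k+j'+1 = n-2*k+1+j' by omega,
      show n-2*k+k+j'+1 = n-k+1+j' by omega] at this
  refine ⟨by omega, by omega, by omega, by omega, ?_⟩
  intro j hj
  rw [show n-2*(k-1)+j = n-2*k+2+j by omega,
    getD_eraseIdx_lt d W (n-k+1) _ (by omega) (by omega),
    show n-2*(k-1)+(k-1)+j = n-k+1+j by omega,
    getD_eraseIdx_ge d W (n-k+1) _ (by omega) (by omega)]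
  have := hrel (j+1) (by omega) (by omega)
  rwa [show n-2*k+1+(j+1) = n-2*k+2+j by omega,
    show n-k+1+(j+1) = n-k+1+j+1 by omega] at this

def psi (k i p : ℕ) : ℕ := if p < i then p - k else (if p-1-k < i then p-1-k else p-k)

lemma det (hl : W.length = n + 1) (k i : ℕ) (hw : Wit d n W k i) (p : ℕ)
    (h1 : n+1-k ≤ p) (h2 : p ≤ n) (h3 : p ≠ i) :
    W.getD p d = W.getD (psi k i p) d ∧ psi k i p < n+1-k := by
  obtain ⟨hk1, h2k, hi, hgt, hwin⟩ := hw
  by_cases hpi : p < i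
  · have hj := hwin (p - (n-k)) (by omega)
    rw [show n-2*k+(p-(n-k)) = p - k by omega,
      show n-2*k+k+(p-(n-k)) = p by omega,
      getD_eraseIdx_lt d W i _ (by omega) (by omega),
      getD_eraseIdx_lt d W i _ (by omega) (by omega)] at hj
    rw [psi, if_pos hpi]
    exact ⟨hj.symm, by omega⟩
  · have hip : i < p := by omega
    have hj := hwin (p - 1 - (n-k)) (by omega)
    rw [show n-2*k+(p-1-(n-k)) = p-1-k by omega,
      show n-2*k+k+(p-1-(n-k)) = p-1 by omega,
      getD_eraseIdx_ge d W i (p-1) (by omega) (by omega),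
      show p-1+1 = p by omega] at hj
    rw [psi, if_neg hpi]
    by_cases hc : p-1-k < i
    · rw [getD_eraseIdx_lt d W i _ (by omega) hc] at hj
      rw [if_pos hc]
      exact ⟨hj.symm, by omega⟩
    · rw [getD_eraseIdx_ge d W i _ (by omega) (by omega),
        show p-1-k+1 = p-k by omega] at hj
      rw [if_neg hc]
      exact ⟨hj.symm, by omega⟩

lemma recon {W' : List α} (hl : W.length = n + 1) (hl' : W'.length = n + 1)
    (k i m : ℕ) (hw : Wit d n W k i) (hw' : Wit d n W' k i) (hm : n+1-k ≤ m)
    (ht : W.take m = W'.take m) (hii : W.getD i d = W'.getD i d) : W = W' := by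
  apply eq_of_getD d W W' (by omega)
  intro p hp
  rcases lt_or_ge p m with hpm | hpm
  · exact getD_of_take_eq d W W' p m ht hpm
  · rcases eq_or_ne p i with rfl | hpi
    · exact hii
    · obtain ⟨e1, b1⟩ := det d hl k i hw p (by omega) (by omega) hpi
      obtain ⟨e2, _⟩ := det d hl' k i hw' p (by omega) (by omega) hpi
      rw [e1, e2, getD_of_take_eq d W W' _ m ht (by omega)]

end part2

lemma lists_finite (A : ℕ → Finset α) (m : ℕ) :
    {l : List α | l.length = m ∧ ∀ i, (h : i < l.length) → l[i] ∈ A i}.Finite := by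
  induction m generalizing A with
  | zero =>
    apply Set.Finite.subset (Set.finite_singleton ([] : List α))
    rintro l ⟨hlen, -⟩
    simp [List.length_eq_zero_iff] at hlen
    simp [hlen]
  | succ m ih =>
    apply Set.Finite.subset (Set.Finite.image (fun p : α × List α => p.1 :: p.2)
      ((A 0).finite_toSet.prod (ih (fun i => A (i+1)))))
    rintro l ⟨hlen, hmem⟩
    rcases l with _ | ⟨a, t⟩
    · simp at hlen
    · refine ⟨(a, t), ⟨?_, ?_, ?_⟩, rfl⟩
      · have := hmem 0 (by simp)
        simpa using this
      · simpa using hlen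
      · intro i hi
        have := hmem (i+1) (by simpa using Nat.succ_lt_succ hi)
        simpa using this

lemma ncard_biUnion_le {ι β : Type*} (L : Finset ι) (f : ι → Set β) :
    (⋃ i ∈ L, f i).ncard ≤ ∑ i ∈ L, (f i).ncard := by
  classical
  induction L using Finset.induction with
  | empty => simp
  | @insert a s ha ih =>
    rw [Finset.sum_insert ha, Finset.set_biUnion_insert _ _ _]
    exact le_trans (Set.ncard_union_le _ _) (Nat.add_le_add_left ih _)


lemma arith (C : ℕ → ℕ) (n : ℕ) :
    ∑ k ∈ Finset.Icc 2 (n/2), (((k-1)+7*(k-3)) * C (n+1-k) + (if 3 ≤ k then C (n-k+2) else 0))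
    ≤ 2*C (n-1) + ∑ i ∈ Finset.range (n-1), (3+8*i) * C (n-2-i) := by
  set K := n/2 with hK
  have hKn : 2*K ≤ n := by omega
  rcases lt_or_ge K 2 with h2 | h2
  · rw [Finset.Icc_eq_empty (by omega)]
    simp
  rw [show Finset.Icc 2 K = Finset.Ico 2 (K+1) from (Finset.Ico_add_one_right_eq_Icc 2 K).symm,
    Finset.sum_Ico_eq_sum_range, show K + 1 - 2 = (K - 2) + 1 by omega,
    Finset.sum_range_succ']
  have e2 : (2 + 0 - 1 + 7 * (2 + 0 - 3)) * C (n + 1 - (2 + 0))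
      + (if (3:ℕ) ≤ 2 + 0 then C (n - (2 + 0) + 2) else 0) = C (n-1) := by
    norm_num
    congr 1
  rw [e2]
  have e3 : ∀ i ∈ Finset.range (K-2),
      ((2+(i+1)-1 + 7*(2+(i+1)-3)) * C (n+1-(2+(i+1)))
        + (if 3 ≤ 2+(i+1) then C (n-(2+(i+1))+2) else 0))
      = (8*i+2) * C (n-2-i) + C (n-2-i+1) := by
    intro i hi
    simp only [Finset.mem_range] at hi
    rw [if_pos (by omega)]
    rw [show 2+(i+1)-1+7*(2+(i+1)-3) = 8*i+2 by omega,
      show n+1-(2+(i+1)) = n-2-i by omega,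
      show n-(2+(i+1))+2 = n-2-i+1 by omega]
  rw [Finset.sum_congr rfl e3, Finset.sum_add_distrib]
  have hle2 : ∑ i ∈ Finset.range (K-2), C (n-2-i+1) ≤
      C (n-1) + ∑ i ∈ Finset.range (n-1), C (n-2-i) := by
    rcases Nat.eq_zero_or_pos (K-2) with h0 | hpos
    · rw [h0]; simp
    rw [show K - 2 = (K-3) + 1 by omega, Finset.sum_range_succ']
    have e5 : ∀ i ∈ Finset.range (K-3), C (n-2-(i+1)+1) = C (n-2-i) := by
      intro i hi
      simp only [Finset.mem_range] at hi
      congr 1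
      omega
    rw [Finset.sum_congr rfl e5, show n-2-0+1 = n-1 by omega, Nat.add_comm]
    apply Nat.add_le_add_left
    exact Finset.sum_le_sum_of_subset (Finset.range_subset_range.2 (by omega))
  have hle1 : ∑ i ∈ Finset.range (K-2), (8*i+2) * C (n-2-i) ≤
      ∑ i ∈ Finset.range (n-1), (8*i+2) * C (n-2-i) :=
    Finset.sum_le_sum_of_subset (Finset.range_subset_range.2 (by omega))
  have hfin : ∑ i ∈ Finset.range (n-1), (8*i+2) * C (n-2-i)
      + ∑ i ∈ Finset.range (n-1), C (n-2-i)
      = ∑ i ∈ Finset.range (n-1), (3+8*i) * C (n-2-i) := by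
    rw [← Finset.sum_add_distrib]
    apply Finset.sum_congr rfl
    intro i _
    ring
  omega

end Stmt17
/-- With alphabets of size 7, if `C n` counts steady words of length `n` (letters
chosen from the respective alphabets) and `F (n+1)` counts words of length `n+1`
that are not steady but whose length-`n` prefix is steady, then
`F (n+1) ≤ 2 C n + 2 C (n-1) + ∑_{i ≥ 0} (3 + 8 i) C (n-2-i)`
(terms with negative index being zero). -/
theorem stmt17 {α : Type*} (A : ℕ → Finset α) (hA : ∀ i, (A i).card = 7)
    (C F : ℕ → ℕ)
    (hC : ∀ n, C n = {W : List α | W.length = n ∧ Steady W ∧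
      ∀ i, (h : i < W.length) → W[i] ∈ A i}.ncard)
    (hF : ∀ n, F (n + 1) = {W : List α | W.length = n + 1 ∧
      (∀ i, (h : i < W.length) → W[i] ∈ A i) ∧ ¬ Steady W ∧ Steady (W.take n)}.ncard)
    (n : ℕ) :
    F (n + 1) ≤ 2 * C n + 2 * C (n - 1) +
      ∑ i ∈ Finset.range (n - 1), (3 + 8 * i) * C (n - 2 - i) := by
  classical
  obtain ⟨d, -⟩ : (A 0).Nonempty := Finset.card_pos.mp (by rw [hA 0]; norm_num)
  open Stmt17 in
  rw [hF n]
  set SCs : ℕ → Set (List α) := fun m => {W : List α | W.length = m ∧ Steady W ∧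
      ∀ i, (h : i < W.length) → W[i] ∈ A i} with hSCs
  set TF : Set (List α) := {W : List α | W.length = n + 1 ∧
      (∀ i, (h : i < W.length) → W[i] ∈ A i) ∧ ¬ Steady W ∧ Steady (W.take n)} with hTF
  have hCs : ∀ m, (SCs m).ncard = C m := fun m => (hC m).symm
  have finSC : ∀ m, (SCs m).Finite := fun m =>
    (Stmt17.lists_finite A m).subset (fun W hW => ⟨hW.1, hW.2.2⟩)
  have finTF : TF.Finite :=
    (Stmt17.lists_finite A (n+1)).subset (fun W hW => ⟨hW.1, hW.2.1⟩)
  -- prefix membership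
  have prefix_mem : ∀ W ∈ TF, ∀ m, m ≤ n → W.take m ∈ SCs m := by
    rintro W ⟨hlen, hlet, hns, hP⟩ m hm
    refine ⟨by simp [hlen]; omega, ?_, ?_⟩
    · have h1 : W.take m = (W.take n).take m := by
        rw [List.take_take]; congr 1; omega
      rw [h1]
      exact Stmt17.steady_take m hP
    · intro i hi
      rw [List.getElem_take]
      exact hlet i (by simp [hlen] at hi; omega)
  -- witness machinery
  set KS : List α → Set ℕ := fun W => {k | ∃ i, Stmt17.Wit d n W k i} with hKS
  set kmin : List α → ℕ := fun W => sInf (KS W) with hkmin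
  set imink : ℕ → List α → ℕ := fun k W => sInf {i | Stmt17.Wit d n W k i} with himink
  set tagk : ℕ → List α → ℕ := fun k W =>
    if imink k W ≤ n - k then imink k W - (n - 2*k + 2)
    else (k-1) + 7*(imink k W - (n - k + 2))
      + (A (imink k W)).toList.idxOf (W.getD (imink k W) d) with htagk
  set famA : Set (List α) := {W ∈ TF | ¬ SquareFree W} with hfamA
  set famB : ℕ → Set (List α) :=
    fun k => {W ∈ TF | SquareFree W ∧ kmin W = k ∧ (KS W).Nonempty} with hfamB
  set famS : ℕ → Set (List α) := fun k => {W ∈ famB k | imink k W = n - k + 1} with hfamS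
  set famD : ℕ → ℕ → Set (List α) :=
    fun k t => {W ∈ famB k | imink k W ≠ n - k + 1 ∧ tagk k W = t} with hfamD
  have wit_famB : ∀ k, ∀ W ∈ famB k, Stmt17.Wit d n W k (imink k W) := by
    rintro k W ⟨hWTF, hsf, hkm, hne⟩
    have h1 : kmin W ∈ KS W := Nat.sInf_mem hne
    rw [hkm] at h1
    exact Nat.sInf_mem h1
  -- kills
  have kill1 : ∀ k, 2 ≤ k → ∀ W ∈ famB k, imink k W ≠ n - 1 := by
    rintro k hk W hWB h1
    obtain ⟨hWTF, hsf, hkm, hne⟩ := hWB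
    have hw := wit_famB k W ⟨hWTF, hsf, hkm, hne⟩
    rw [h1] at hw
    exact Stmt17.K2 d hWTF.1 hWTF.2.2.2 k hk hw
  have kill2 : ∀ k, 2 ≤ k → ∀ W ∈ famB k, imink k W ≠ n - 2*k + 1 := by
    rintro k hk W hWB h1
    obtain ⟨hWTF, hsf, hkm, hne⟩ := hWB
    have hw := wit_famB k W ⟨hWTF, hsf, hkm, hne⟩
    rw [h1] at hw
    have hw2 := Stmt17.K3 d hWTF.1 k hk hw
    have : k - 1 ∈ KS W := ⟨n - k + 1, hw2⟩
    have h3 : kmin W ≤ k - 1 := Nat.sInf_le this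
    omega
  -- cover
  have cover : TF ⊆ (famA ∪ famB 1) ∪ ⋃ k ∈ Finset.Icc 2 (n/2), famB k := by
    intro W hW
    obtain ⟨hlen, hlet, hns, hP⟩ := hW
    by_cases hsf : SquareFree W
    · obtain ⟨k0, i0, hwit⟩ := Stmt17.exists_wit d hlen hP hsf hns
      have hne : (KS W).Nonempty := ⟨k0, i0, hwit⟩
      have hkm : kmin W ∈ KS W := Nat.sInf_mem hne
      obtain ⟨i1, hw1⟩ := hkm
      have h1k : 1 ≤ kmin W := hw1.1
      have h2k : 2 * kmin W ≤ n := hw1.2.1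
      by_cases h1 : kmin W = 1
      · left; right
        exact ⟨⟨hlen, hlet, hns, hP⟩, hsf, h1, hne⟩
      · right
        simp only [Set.mem_iUnion]
        exact ⟨kmin W, Finset.mem_Icc.mpr ⟨by omega, by omega⟩,
          ⟨⟨hlen, hlet, hns, hP⟩, hsf, rfl, hne⟩⟩
    · left; left
      exact ⟨⟨hlen, hlet, hns, hP⟩, hsf⟩
  -- bounds
  have bA : famA.ncard ≤ C n := by
    rw [← hCs n]
    refine Set.ncard_le_ncard_of_injOn (fun W => W.take n) ?_ ?_ (finSC n)
    · rintro W ⟨hWTF, -⟩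
      exact prefix_mem W hWTF n le_rfl
    · rintro W ⟨hWTF, hsq⟩ W' ⟨hWTF', hsq'⟩ ht
      obtain ⟨hlen, hlet, hns, hP⟩ := hWTF
      obtain ⟨hlen', hlet', hns', hP'⟩ := hWTF'
      obtain ⟨hn1, hrel⟩ := Stmt17.caseA d hlen hP hsq
      obtain ⟨-, hrel'⟩ := Stmt17.caseA d hlen' hP' hsq'
      apply Stmt17.eq_of_getD d W W' (by omega)
      intro p hp
      rcases lt_or_ge p n with h | h
      · exact Stmt17.getD_of_take_eq d W W' p n ht h
      · have hpn : p = n := by omega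
        rw [hpn, hrel, hrel']
        exact Stmt17.getD_of_take_eq d W W' (n-1) n ht (by omega)
  have bB1 : (famB 1).ncard ≤ C n := by
    rw [← hCs n]
    refine Set.ncard_le_ncard_of_injOn (fun W => W.take n) ?_ ?_ (finSC n)
    · rintro W ⟨hWTF, -⟩
      exact prefix_mem W hWTF n le_rfl
    · intro W hWB W' hWB' ht
      have hw := wit_famB 1 W hWB
      have hw' := wit_famB 1 W' hWB'
      have hlen : W.length = n + 1 := hWB.1.1
      have hlen' : W'.length = n + 1 := hWB'.1.1
      have hi : imink 1 W = n - 1 := by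
        have h1 := hw.2.2.1
        have h2 := hw.2.2.2.1
        omega
      have hi' : imink 1 W' = n - 1 := by
        have h1 := hw'.2.2.1
        have h2 := hw'.2.2.2.1
        omega
      have h2n : 2 ≤ n := by have := hw.2.1; omega
      rw [hi] at hw
      rw [hi'] at hw'
      exact Stmt17.recon d hlen hlen' 1 (n-1) n hw hw' (by omega) ht
        (Stmt17.getD_of_take_eq d W W' (n-1) n ht (by omega))
  have bD : ∀ k, 2 ≤ k → ∀ t, (famD k t).ncard ≤ C (n+1-k) := by
    intro k hk t
    rw [← hCs (n+1-k)]
    refine Set.ncard_le_ncard_of_injOn (fun W => W.take (n+1-k)) ?_ ?_ (finSC (n+1-k))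
    · rintro W ⟨⟨hWTF, -⟩, -⟩
      exact prefix_mem W hWTF (n+1-k) (by omega)
    · rintro W ⟨hWB, hni, htg⟩ W' ⟨hWB', hni', htg'⟩ ht
      have hw := wit_famB k W hWB
      have hw' := wit_famB k W' hWB'
      have hlen : W.length = n + 1 := hWB.1.1
      have hlen' : W'.length = n + 1 := hWB'.1.1
      have hlet : ∀ i, (h : i < W.length) → W[i] ∈ A i := hWB.1.2.1
      have hlet' : ∀ i, (h : i < W'.length) → W'[i] ∈ A i := hWB'.1.2.1
      have hk2n : 2*k ≤ n := hw.2.1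
      have hb1 : imink k W < n := hw.2.2.1
      have hb2 : n < imink k W + 2*k := hw.2.2.2.1
      have hb1' : imink k W' < n := hw'.2.2.1
      have hb2' : n < imink k W' + 2*k := hw'.2.2.2.1
      have hk1 : imink k W ≠ n - 1 := kill1 k hk W hWB
      have hk1' : imink k W' ≠ n - 1 := kill1 k hk W' hWB'
      have hk2 : imink k W ≠ n - 2*k + 1 := kill2 k hk W hWB
      have hk2' : imink k W' ≠ n - 2*k + 1 := kill2 k hk W' hWB'
      have hmem : W.getD (imink k W) d ∈ (A (imink k W)).toList := by
        rw [List.getD_eq_getElem W d (by omega : imink k W < W.length)]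
        exact Finset.mem_toList.mpr (hlet _ _)
      have hmem' : W'.getD (imink k W') d ∈ (A (imink k W')).toList := by
        rw [List.getD_eq_getElem W' d (by omega : imink k W' < W'.length)]
        exact Finset.mem_toList.mpr (hlet' _ _)
      have hr : ((A (imink k W)).toList).idxOf (W.getD (imink k W) d) < 7 := by
        have h1 := List.idxOf_lt_length_iff.mpr hmem
        rwa [Finset.length_toList, hA] at h1
      have hr' : ((A (imink k W')).toList).idxOf (W'.getD (imink k W') d) < 7 := by
        have h1 := List.idxOf_lt_length_iff.mpr hmem'
        rwa [Finset.length_toList, hA] at h1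
      have htt : tagk k W = tagk k W' := htg.trans htg'.symm
      simp only [htagk] at htt
      by_cases hc : imink k W ≤ n - k
      · by_cases hc' : imink k W' ≤ n - k
        · rw [if_pos hc, if_pos hc'] at htt
          have hieq : imink k W = imink k W' := by omega
          rw [← hieq] at hw'
          exact Stmt17.recon d hlen hlen' k (imink k W) (n+1-k) hw hw' le_rfl ht
            (Stmt17.getD_of_take_eq d W W' _ (n+1-k) ht (by omega))
        · rw [if_pos hc, if_neg hc'] at htt
          omega
      · by_cases hc' : imink k W' ≤ n - k
        · rw [if_neg hc, if_pos hc'] at htt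
          omega
        · rw [if_neg hc, if_neg hc'] at htt
          have hieq : imink k W = imink k W' := by omega
          have hreq : ((A (imink k W)).toList).idxOf (W.getD (imink k W) d)
              = ((A (imink k W')).toList).idxOf (W'.getD (imink k W') d) := by omega
          have hmem'' : W'.getD (imink k W) d ∈ (A (imink k W)).toList := by
            rw [hieq]; exact hmem'
          have hre := hreq
          rw [← hieq] at hre
          have hii : W.getD (imink k W) d = W'.getD (imink k W) d :=
            (List.idxOf_inj hmem).mp hre
          rw [← hieq] at hw'
          exact Stmt17.recon d hlen hlen' k (imink k W) (n+1-k) hw hw' le_rfl ht hii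
  have bS : ∀ k, 2 ≤ k → (famS k).ncard ≤ (if 3 ≤ k then C (n-k+2) else 0) := by
    intro k hk
    by_cases h3 : 3 ≤ k
    · rw [if_pos h3, ← hCs (n-k+2)]
      refine Set.ncard_le_ncard_of_injOn (fun W => W.take (n-k+2)) ?_ ?_ (finSC (n-k+2))
      · rintro W ⟨hWB, -⟩
        have h2kn : 2*k ≤ n := (wit_famB k W hWB).2.1
        exact prefix_mem W hWB.1 (n-k+2) (by omega)
      · rintro W ⟨hWB, hieq⟩ W' ⟨hWB', hieq'⟩ ht
        have hw := wit_famB k W hWB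
        have hw' := wit_famB k W' hWB'
        have h2kn : 2*k ≤ n := hw.2.1
        rw [hieq] at hw
        rw [hieq'] at hw'
        exact Stmt17.recon d hWB.1.1 hWB'.1.1 k (n-k+1) (n-k+2) hw hw' (by omega) ht
          (Stmt17.getD_of_take_eq d W W' _ (n-k+2) ht (by omega))
    · rw [if_neg h3]
      have hke : k = 2 := by omega
      have : famS k = ∅ := by
        rw [Set.eq_empty_iff_forall_notMem]
        rintro W ⟨hWB, hieq⟩
        have hw := wit_famB k W hWB
        have h2kn : 2*k ≤ n := hw.2.1
        refine kill1 k hk W hWB ?_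
        omega
      rw [this]
      simp
  have subcover : ∀ k, 2 ≤ k →
      famB k ⊆ (⋃ t ∈ Finset.range ((k-1)+7*(k-3)), famD k t) ∪ famS k := by
    intro k hk W hWB
    by_cases hi : imink k W = n - k + 1
    · right
      exact ⟨hWB, hi⟩
    · left
      have hw := wit_famB k W hWB
      have hk2n : 2*k ≤ n := hw.2.1
      have hb1 : imink k W < n := hw.2.2.1
      have hb2 : n < imink k W + 2*k := hw.2.2.2.1
      have hki1 : imink k W ≠ n - 1 := kill1 k hk W hWB
      have hki2 : imink k W ≠ n - 2*k + 1 := kill2 k hk W hWB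
      have hlet : ∀ i, (h : i < W.length) → W[i] ∈ A i := hWB.1.2.1
      have hlen : W.length = n + 1 := hWB.1.1
      have hmem : W.getD (imink k W) d ∈ (A (imink k W)).toList := by
        rw [List.getD_eq_getElem W d (by omega : imink k W < W.length)]
        exact Finset.mem_toList.mpr (hlet _ _)
      have hr : ((A (imink k W)).toList).idxOf (W.getD (imink k W) d) < 7 := by
        have h1 := List.idxOf_lt_length_iff.mpr hmem
        rwa [Finset.length_toList, hA] at h1
      have htb : tagk k W < (k-1)+7*(k-3) := by
        simp only [htagk]
        by_cases hc : imink k W ≤ n - k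
        · rw [if_pos hc]
          omega
        · rw [if_neg hc]
          omega
      simp only [Set.mem_iUnion]
      exact ⟨tagk k W, Finset.mem_range.mpr htb, hWB, hi, rfl⟩
  have bBk : ∀ k ∈ Finset.Icc 2 (n/2), (famB k).ncard ≤
      ((k-1)+7*(k-3)) * C (n+1-k) + (if 3 ≤ k then C (n-k+2) else 0) := by
    intro k hk
    simp only [Finset.mem_Icc] at hk
    have h2 : famB k ⊆ TF := fun W hW => hW.1
    calc (famB k).ncard
        ≤ ((⋃ t ∈ Finset.range ((k-1)+7*(k-3)), famD k t) ∪ famS k).ncard := by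
          have hfin1 : ((⋃ t ∈ Finset.range ((k-1)+7*(k-3)), famD k t) ∪ famS k).Finite := by
            apply finTF.subset
            intro W hW
            rcases hW with hW | hW
            · simp only [Set.mem_iUnion] at hW
              obtain ⟨t, -, h⟩ := hW
              exact h.1.1
            · exact hW.1.1
          exact Set.ncard_le_ncard (subcover k hk.1) hfin1
      _ ≤ (⋃ t ∈ Finset.range ((k-1)+7*(k-3)), famD k t).ncard + (famS k).ncard :=
          Set.ncard_union_le _ _
      _ ≤ (∑ t ∈ Finset.range ((k-1)+7*(k-3)), (famD k t).ncard) + (famS k).ncard :=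
          Nat.add_le_add_right (Stmt17.ncard_biUnion_le _ _) _
      _ ≤ ((k-1)+7*(k-3)) * C (n+1-k) + (if 3 ≤ k then C (n-k+2) else 0) := by
          apply Nat.add_le_add
          · calc ∑ t ∈ Finset.range ((k-1)+7*(k-3)), (famD k t).ncard
                ≤ ∑ _t ∈ Finset.range ((k-1)+7*(k-3)), C (n+1-k) :=
                  Finset.sum_le_sum (fun t _ => bD k hk.1 t)
              _ = ((k-1)+7*(k-3)) * C (n+1-k) := by
                  rw [Finset.sum_const, Finset.card_range, smul_eq_mul]
          · exact bS k hk.1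
  -- assemble
  have main : TF.ncard ≤ 2 * C n +
      ∑ k ∈ Finset.Icc 2 (n/2),
        (((k-1)+7*(k-3)) * C (n+1-k) + (if 3 ≤ k then C (n-k+2) else 0)) := by
    have c1 : TF.ncard ≤ (famA ∪ famB 1).ncard
        + ∑ k ∈ Finset.Icc 2 (n/2), (famB k).ncard := by
      calc TF.ncard ≤ ((famA ∪ famB 1) ∪ ⋃ k ∈ Finset.Icc 2 (n/2), famB k).ncard := by
            have hfin2 : ((famA ∪ famB 1) ∪ ⋃ k ∈ Finset.Icc 2 (n/2), famB k).Finite := by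
              apply finTF.subset
              intro W hW
              rcases hW with (hW | hW) | hW
              · exact hW.1
              · exact hW.1
              · simp only [Set.mem_iUnion] at hW
                obtain ⟨k, -, h⟩ := hW
                exact h.1
            exact Set.ncard_le_ncard cover hfin2
        _ ≤ (famA ∪ famB 1).ncard + (⋃ k ∈ Finset.Icc 2 (n/2), famB k).ncard :=
            Set.ncard_union_le _ _
        _ ≤ _ := Nat.add_le_add_left (Stmt17.ncard_biUnion_le _ _) _
    have c2 : (famA ∪ famB 1).ncard ≤ 2 * C n := by
      have := Set.ncard_union_le famA (famB 1)
      omega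
    have c3 := Finset.sum_le_sum bBk
    omega
  have final := Stmt17.arith C n
  omega
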